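/- Let M be a complete discrete valuation field of mixed characteristic (0, p) containing a primitive p-th root of unity ζ_p, with valuation ring O_M. Then the map x ↦ 1 + (ζ_p − 1)^p·x induces a group isomorphism from the additive group (ζ_p − 1)^{−1}O_M / O_M onto the multiplicative group (1 + pO_M)/(1 + (ζ_p − 1)^p·O_M). -/

import Mathlib

noncomputable section

open IsLocalRing Multiplicative

local notation "ℤₘ₀" => WithZero (Multiplicative ℤ)

variable {M : Type*} [Field M]

/-- The additive subgroup `(ζ - 1)⁻¹ 𝒪_M` of `M`. -/
def scaledIntegers (vM : Valuation M ℤₘ₀) (ζ : M) : AddSubgroup M where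
  carrier := {x : M | vM ((ζ - 1) * x) ≤ 1}
  zero_mem' := by simp
  add_mem' := by
    intro a b ha hb
    have h : vM ((ζ - 1) * (a + b)) ≤ max (vM ((ζ - 1) * a)) (vM ((ζ - 1) * b)) := by
      rw [mul_add]; exact vM.map_add _ _
    exact le_trans h (max_le ha hb)
  neg_mem' := by
    intro a ha
    simpa [mul_neg] using ha

/-- `𝒪_M` as an additive subgroup of `M`. -/
def integersAddSubgroup (vM : Valuation M ℤₘ₀) : AddSubgroup M :=
  vM.valuationSubring.toSubring.toAddSubgroup

/-- The subgroup `1 + t 𝒪_M` of the unit group of the valuation ring `𝒪_M`. -/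
def onePlusIdeal (vM : Valuation M ℤₘ₀) (t : vM.valuationSubring) :
    Subgroup (vM.valuationSubring)ˣ where
  carrier := {u | ∃ a : vM.valuationSubring, (u : vM.valuationSubring) = 1 + t * a}
  one_mem' := ⟨0, by simp⟩
  mul_mem' := by
    rintro u v ⟨a, ha⟩ ⟨b, hb⟩
    exact ⟨a + b + t * (a * b), by rw [Units.val_mul, ha, hb]; ring⟩
  inv_mem' := by
    rintro u ⟨a, ha⟩
    refine ⟨-a * ↑u⁻¹, ?_⟩
    have h1 : (u : vM.valuationSubring) * ((u⁻¹ : (vM.valuationSubring)ˣ) : vM.valuationSubring) = 1 :=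
      Units.mul_inv u
    have h2 : (u : vM.valuationSubring) *
        (1 + t * (-a * ((u⁻¹ : (vM.valuationSubring)ˣ) : vM.valuationSubring))) = 1 := by
      have h3 : (u : vM.valuationSubring) *
          (1 + t * (-a * ((u⁻¹ : (vM.valuationSubring)ˣ) : vM.valuationSubring)))
          = ↑u - t * a * (↑u * ↑u⁻¹) := by ring
      rw [h3, h1, ha]; ring
    exact (mul_left_cancel₀ (Units.ne_zero u) (h2.trans h1.symm)).symm

namespace OnePlusAux

variable (vM : Valuation M ℤₘ₀)

lemma coe_natCast' (n : ℕ) : (((n : vM.valuationSubring)) : M) = (n : M) := by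
  push_cast; rfl

lemma val_eq_one_of_isUnit {a : vM.valuationSubring} (h : IsUnit a) : vM (a : M) = 1 := by
  obtain ⟨u, rfl⟩ := h
  have h1 : ((u.val : vM.valuationSubring) : M) * ((u.inv : vM.valuationSubring) : M) = 1 := by
    norm_cast; rw [u.val_inv]
  have h2 := congrArg vM h1
  rw [map_mul, map_one] at h2
  have ha : vM ((u.val : vM.valuationSubring) : M) ≤ 1 := u.val.2
  have hb : vM ((u.inv : vM.valuationSubring) : M) ≤ 1 := u.inv.2
  refine le_antisymm ha ?_
  calc (1:ℤₘ₀) = vM _ * vM _ := h2.symm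
    _ ≤ vM ((u.val : vM.valuationSubring) : M) * 1 := mul_le_mul_right hb _
    _ = _ := mul_one _

variable {vM}

/-- Make a unit of the valuation subring from a field element of valuation one. -/
def unitOfVal {a : M} (h : vM a = 1) : (vM.valuationSubring)ˣ :=
  have ha : a ≠ 0 := by
    intro h0; rw [h0, map_zero] at h; exact zero_ne_one h
  ⟨⟨a, le_of_eq h⟩, ⟨a⁻¹, by rw [Valuation.mem_valuationSubring_iff, map_inv₀, h, inv_one]⟩,
    Subtype.ext (mul_inv_cancel₀ ha), Subtype.ext (inv_mul_cancel₀ ha)⟩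

@[simp] lemma unitOfVal_val {a : M} (h : vM a = 1) :
    (((unitOfVal h : (vM.valuationSubring)ˣ) : vM.valuationSubring) : M) = a := rfl

@[simp] lemma unitOfVal_inv_val {a : M} (h : vM a = 1) :
    ((((unitOfVal h)⁻¹ : (vM.valuationSubring)ˣ) : vM.valuationSubring) : M) = a⁻¹ := rfl

variable (vM)

lemma val_pow_sub_one_le {ζ : M} (hζO : vM ζ ≤ 1) (m : ℕ) :
    vM (ζ ^ m - 1) ≤ vM (ζ - 1) := by
  rw [← geom_sum_mul, map_mul]
  calc vM (∑ i ∈ Finset.range m, ζ ^ i) * vM (ζ - 1) ≤ 1 * vM (ζ - 1) := by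
        refine mul_le_mul_left (Valuation.map_sum_le vM fun i _ => ?_) _
        rw [map_pow]; exact pow_le_one' hζO i
    _ = vM (ζ - 1) := one_mul _

lemma val_one_sub_pow {p : ℕ} (hp : p.Prime) {ζ : M} (hζ : IsPrimitiveRoot ζ p)
    (hζO : vM ζ ≤ 1) {m : ℕ} (hm : ¬ p ∣ m) : vM (1 - ζ ^ m) = vM (1 - ζ) := by
  rw [Valuation.map_sub_swap, Valuation.map_sub_swap vM 1 ζ]
  refine le_antisymm (val_pow_sub_one_le vM hζO m) ?_
  have hcop : Nat.Coprime m p := (hp.coprime_iff_not_dvd.2 hm).symm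
  obtain ⟨b, -, hb⟩ := Nat.exists_mul_mod_eq_one_of_coprime hcop hp.one_lt
  have hpow : (ζ ^ m) ^ b = ζ := by
    rw [← pow_mul, ← Nat.div_add_mod (m * b) p, pow_add, pow_mul, hζ.pow_eq_one, one_pow, one_mul,
      hb, pow_one]
  calc vM (ζ - 1) = vM ((ζ ^ m) ^ b - 1) := by rw [hpow]
    _ ≤ vM (ζ ^ m - 1) := val_pow_sub_one_le vM (by rw [map_pow]; exact pow_le_one' hζO m) b

/-- The key valuation identity: `v((ζ-1)^(p-1)) = v(p)`. -/
lemma val_p {p : ℕ} (hp : p.Prime) {ζ : M} (hζ : IsPrimitiveRoot ζ p) (hζO : vM ζ ≤ 1) :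
    vM ((ζ - 1) ^ (p - 1)) = vM (p : M) := by
  obtain ⟨n, hn⟩ : ∃ n, p = n + 1 := ⟨p - 1, (Nat.succ_pred_eq_of_pos hp.pos).symm⟩
  subst hn
  have hprod := hζ.prod_one_sub_pow_eq_order
  have hval := congrArg vM hprod
  rw [map_prod] at hval
  have heach : ∀ k ∈ Finset.range n, vM (1 - ζ ^ (k + 1)) = vM (1 - ζ) := by
    intro k hk
    refine val_one_sub_pow vM hp hζ hζO fun hdvd => ?_
    have h1 : k + 1 < n + 1 := Nat.succ_lt_succ (Finset.mem_range.mp hk)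
    have h2 : 0 < k + 1 := Nat.succ_pos k
    exact absurd (Nat.le_of_dvd h2 hdvd) (by omega)
  rw [Finset.prod_congr rfl heach, Finset.prod_const, Finset.card_range] at hval
  rw [map_pow, Nat.add_sub_cancel, Valuation.map_sub_swap, hval]
  push_cast
  ring_nf

end OnePlusAux

open OnePlusAux

set_option maxHeartbeats 1000000 in
/-- The isomorphism `(ζ_p - 1)⁻¹𝒪_M/𝒪_M ≃ (1 + p𝒪_M)/(1 + (ζ_p - 1)^p 𝒪_M)`,
`x ↦ 1 + (ζ_p - 1)^p x`, for a complete discrete valuation field `M` of mixed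
characteristic `(0, p)` containing a primitive `p`-th root of unity `ζ_p`. -/
theorem onePlus_quotient_mulEquiv
    (M : Type*) [Field M] [CharZero M] (vM : Valuation M ℤₘ₀)
    (hsurj : Function.Surjective vM)
    (hcompl : IsAdicComplete (maximalIdeal vM.valuationSubring) vM.valuationSubring)
    (p : ℕ) (hp : p.Prime)
    (hres : CharP (ResidueField vM.valuationSubring) p)
    (ζ : vM.valuationSubring) (hζ : IsPrimitiveRoot (ζ : M) p) :
    ∃ φ : Multiplicative
        (scaledIntegers vM (ζ : M) ⧸
          (integersAddSubgroup vM).addSubgroupOf (scaledIntegers vM (ζ : M))) ≃*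
        (onePlusIdeal vM (p : vM.valuationSubring) ⧸
          (onePlusIdeal vM ((ζ - 1) ^ p)).subgroupOf (onePlusIdeal vM (p : vM.valuationSubring))),
      ∀ (x : scaledIntegers vM (ζ : M))
        (u : onePlusIdeal vM (p : vM.valuationSubring)),
        ((((u : (vM.valuationSubring)ˣ) : vM.valuationSubring)) : M)
            = 1 + ((ζ : M) - 1) ^ p * (x : M) →
          φ (Multiplicative.ofAdd (QuotientAddGroup.mk x)) = QuotientGroup.mk u := by
  classical
  have hp2 : 2 ≤ p := hp.two_le
  set ζM : M := (ζ : M) with hζMdef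
  set τ : M := ζM - 1 with hτdef
  set s : M := τ ^ p with hsdef
  -- basic facts
  have hζO : vM ζM ≤ 1 := ζ.2
  have hζne : ζM ≠ 1 := hζ.ne_one hp.one_lt
  have hτ0 : τ ≠ 0 := sub_ne_zero.mpr hζne
  have hs0 : s ≠ 0 := pow_ne_zero _ hτ0
  have hpM : (p : M) ≠ 0 := Nat.cast_ne_zero.mpr hp.ne_zero
  have hτO : vM τ ≤ 1 := by
    have := (ζ - 1 : vM.valuationSubring).2
    rwa [show ((ζ - 1 : vM.valuationSubring) : M) = τ by push_cast; rfl] at this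
  have hkey : vM (τ ^ (p - 1)) = vM (p : M) := val_p vM hp hζ hζO
  have hτp1 : vM (τ ^ (p - 1)) ≠ 0 := by
    simp only [ne_eq, map_eq_zero]
    exact pow_ne_zero _ hτ0
  -- `v(p) < 1`
  have hplt : vM (p : M) < 1 := by
    refine lt_of_le_of_ne ?_ ?_
    · have := (p : vM.valuationSubring).2
      rwa [show (((p : vM.valuationSubring)) : M) = (p : M) from coe_natCast' vM p] at this
    · intro h1
      have h1' : vM (((p : vM.valuationSubring) : M)) = 1 := by rwa [coe_natCast' vM p]
      have hup : IsUnit (p : vM.valuationSubring) := ⟨unitOfVal h1', Subtype.ext rfl⟩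
      have hmap := hup.map (residue vM.valuationSubring)
      rw [map_natCast, CharP.cast_eq_zero (ResidueField vM.valuationSubring) p] at hmap
      exact not_isUnit_zero hmap
  have hppow : τ ^ p = τ ^ (p - 1) * τ := by
    conv_lhs => rw [show p = (p - 1) + 1 by omega]
    rw [pow_succ]
  -- valuation bound on `s * x` for `x` in the scaled integers
  have hsx : ∀ x : M, vM (τ * x) ≤ 1 → vM (s * x) ≤ vM (p : M) := by
    intro x hx
    have he : s * x = τ ^ (p - 1) * (τ * x) := by rw [hsdef, hppow]; ring
    rw [he, map_mul]
    calc vM (τ ^ (p - 1)) * vM (τ * x) ≤ vM (τ ^ (p - 1)) * 1 := mul_le_mul_right hx _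
      _ = vM (p : M) := by rw [mul_one, hkey]
  have hsx1 : ∀ x : M, vM (τ * x) ≤ 1 → vM (s * x) < 1 :=
    fun x hx => lt_of_le_of_lt (hsx x hx) hplt
  -- membership proofs for elements of the scaled integers
  have hmem : ∀ x : scaledIntegers vM ζM, vM (τ * (x : M)) ≤ 1 := fun x => x.2
  have hone : ∀ x : scaledIntegers vM ζM, vM (1 + s * (x : M)) = 1 :=
    fun x => Valuation.map_one_add_of_lt vM (hsx1 _ (hmem x))
  -- the basic map into the group of units
  set G := onePlusIdeal vM (p : vM.valuationSubring) with hGdef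
  set H := (onePlusIdeal vM ((ζ - 1) ^ p)).subgroupOf G with hHdef
  have htcoe : (((ζ - 1 : vM.valuationSubring) ^ p : vM.valuationSubring) : M) = s := by push_cast; rfl
  have hUUmem : ∀ x : scaledIntegers vM ζM, unitOfVal (hone x) ∈ G := by
    intro x
    refine ⟨⟨s * (x : M) / (p : M), ?_⟩, ?_⟩
    · rw [Valuation.mem_valuationSubring_iff]
      have hc : vM (s * (x : M) / (p : M)) * vM (p : M) ≤ 1 * vM (p : M) := by
        rw [← map_mul, div_mul_cancel₀ _ hpM, one_mul]
        exact hsx _ (hmem x)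
      exact le_of_mul_le_mul_right hc (zero_lt_iff.mpr (by simpa using hpM))
    · refine Subtype.ext ?_
      show (1 : M) + s * (x : M) = _
      push_cast [coe_natCast' vM p]
      rw [mul_div_cancel₀ _ hpM]
  set UU : scaledIntegers vM ζM → G := fun x => ⟨unitOfVal (hone x), hUUmem x⟩ with hUUdef
  have hUUval : ∀ x : scaledIntegers vM ζM,
      ((((UU x : (vM.valuationSubring)ˣ)) : vM.valuationSubring) : M) = 1 + s * (x : M) := fun x => rfl
  -- the additive homomorphism
  have hUUadd : ∀ x y : scaledIntegers vM ζM,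
      (QuotientGroup.mk (UU (x + y)) : G ⧸ H) = QuotientGroup.mk (UU x * UU y) := by
    intro x y
    rw [QuotientGroup.eq]
    rw [hHdef, Subgroup.mem_subgroupOf]
    have hxy : (1 : M) + s * ((x : M) + (y : M)) ≠ 0 := by
      intro h0
      have := hone (x + y)
      rw [show ((x + y : scaledIntegers vM ζM) : M) = (x : M) + (y : M) from rfl, h0,
        map_zero] at this
      exact zero_ne_one this
    -- the correction term
    have hcmem : vM (s * (x : M) * (y : M) / (1 + s * ((x : M) + (y : M)))) ≤ 1 := by
      have hd : vM (1 + s * ((x : M) + (y : M))) = 1 := hone (x + y)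
      have h1 : vM (s * (x : M) * (y : M)) * vM τ ≤ 1 * vM τ := by
        rw [← map_mul]
        have he : s * (x : M) * (y : M) * τ = (τ * x) * (τ * y) * τ ^ (p - 1) := by
          rw [hsdef, hppow]; ring
        rw [he, map_mul, map_mul]
        have hb : vM (τ ^ (p - 1)) ≤ vM τ := by
          rw [map_pow]
          calc (vM τ) ^ (p - 1) ≤ (vM τ) ^ 1 :=
                pow_le_pow_right_of_le_one' hτO (by omega)
            _ = vM τ := pow_one _
        calc vM (τ * (x:M)) * vM (τ * (y:M)) * vM (τ ^ (p-1))
            ≤ 1 * 1 * vM τ := by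
              exact mul_le_mul' (mul_le_mul' (hmem x) (hmem y)) hb
          _ = 1 * vM τ := by rw [one_mul]
      have h2 : vM (s * (x : M) * (y : M)) ≤ 1 :=
        le_of_mul_le_mul_right h1 (zero_lt_iff.mpr (by simpa using hτ0))
      rw [map_div₀, hd, div_one]
      exact h2
    refine ⟨⟨s * (x : M) * (y : M) / (1 + s * ((x : M) + (y : M))), hcmem⟩, ?_⟩
    refine Subtype.ext ?_
    show ((1 : M) + s * ((x : M) + (y : M)))⁻¹ * ((1 + s * (x : M)) * (1 + s * (y : M))) = _
    push_cast [htcoe]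
    field_simp
    ring
  set ψ : scaledIntegers vM ζM →+ Additive (G ⧸ H) :=
    { toFun := fun x => Additive.ofMul (QuotientGroup.mk (UU x))
      map_zero' := by
        have h0 : UU 0 = 1 := by
          refine Subtype.ext (Units.ext (Subtype.ext ?_))
          show (1 : M) + s * ((0 : scaledIntegers vM ζM) : M) = 1
          simp
        show Additive.ofMul (QuotientGroup.mk (UU 0) : G ⧸ H) = 0
        rw [h0, QuotientGroup.mk_one]
        rfl
      map_add' := by
        intro x y
        have := hUUadd x y
        show Additive.ofMul (QuotientGroup.mk (UU (x + y)))
            = Additive.ofMul (QuotientGroup.mk (UU x)) + Additive.ofMul (QuotientGroup.mk (UU y))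
        rw [this, QuotientGroup.mk_mul]
        rfl } with hψdef
  -- kernel
  set B := (integersAddSubgroup vM).addSubgroupOf (scaledIntegers vM ζM) with hBdef
  have hB : ∀ x ∈ B, ψ x = 0 := by
    intro x hx
    have hxO : vM (x : M) ≤ 1 := hx
    show Additive.ofMul (QuotientGroup.mk (UU x)) = 0
    have : (QuotientGroup.mk (UU x) : G ⧸ H) = 1 := by
      rw [QuotientGroup.eq_one_iff, hHdef, Subgroup.mem_subgroupOf]
      refine ⟨⟨(x : M), hxO⟩, Subtype.ext ?_⟩
      show (1 : M) + s * (x : M) = _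
      push_cast [htcoe]
      ring
    rw [this]; rfl
  set L := QuotientAddGroup.lift (M := Additive (G ⧸ H)) B ψ (fun x hx => AddMonoidHom.mem_ker.mpr (hB x hx)) with hLdef
  -- injectivity
  have hinj : Function.Injective L := by
    rw [injective_iff_map_eq_zero]
    intro a ha
    induction a using QuotientAddGroup.induction_on with
    | H x =>
      rw [QuotientAddGroup.lift_mk] at ha
      have h1 : (QuotientGroup.mk (UU x) : G ⧸ H) = 1 := Additive.ofMul.injective ha
      rw [QuotientGroup.eq_one_iff, hHdef, Subgroup.mem_subgroupOf] at h1
      obtain ⟨c, hc⟩ := h1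
      have hc' : (1 : M) + s * (x : M) = 1 + s * (c : M) := by
        have := congrArg (fun z : vM.valuationSubring => (z : M)) hc
        exact (hUUval x).symm.trans (by simpa [htcoe] using this)
      have hxc : (x : M) = (c : M) := by
        have := add_left_cancel hc'
        exact mul_left_cancel₀ hs0 this
      rw [QuotientAddGroup.eq_zero_iff]
      show (x : M) ∈ integersAddSubgroup vM
      show vM (x : M) ≤ 1
      rw [hxc]
      exact c.2
  -- surjectivity
  have hsurjL : Function.Surjective L := by
    intro q
    obtain ⟨u, hu⟩ := QuotientGroup.mk_surjective (Additive.toMul q)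
    obtain ⟨c, hc⟩ := u.2
    have hcM : ((((u : (vM.valuationSubring)ˣ) : vM.valuationSubring)) : M)
        = 1 + (p : M) * (c : M) := by
      have := congrArg (fun z : vM.valuationSubring => (z : M)) hc
      simpa [coe_natCast' vM p] using this
    set x : M := (p : M) * (c : M) / s with hxdef
    have hxmem : x ∈ scaledIntegers vM ζM := by
      show vM (τ * x) ≤ 1
      have h1 : vM (τ * x) * vM (τ ^ (p - 1)) ≤ 1 * vM (τ ^ (p - 1)) := by
        rw [← map_mul]
        have he : τ * x * τ ^ (p - 1) = (p : M) * (c : M) := by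
          rw [hxdef, hsdef, hppow]; field_simp
        rw [he, one_mul, map_mul]
        calc vM (p : M) * vM (c : M) ≤ vM (p : M) * 1 := mul_le_mul_right c.2 _
          _ = vM (p : M) := mul_one _
          _ = vM (τ ^ (p - 1)) := hkey.symm
      exact le_of_mul_le_mul_right h1 (zero_lt_iff.mpr hτp1)
    have hUx : UU ⟨x, hxmem⟩ = u := by
      refine Subtype.ext (Units.ext (Subtype.ext ?_))
      have h2 : ((((UU ⟨x, hxmem⟩ : (vM.valuationSubring)ˣ) : vM.valuationSubring)) : M)
          = 1 + s * x := hUUval _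
      rw [h2, hcM, hxdef, mul_div_cancel₀ _ hs0]
    refine ⟨QuotientAddGroup.mk ⟨x, hxmem⟩, ?_⟩
    have h3 : L (QuotientAddGroup.mk ⟨x, hxmem⟩)
        = Additive.ofMul (QuotientGroup.mk (UU ⟨x, hxmem⟩) : G ⧸ H) := rfl
    rw [h3, hUx, hu]
    rfl
  -- assemble the isomorphism
  refine ⟨AddEquiv.toMultiplicativeLeft (AddEquiv.ofBijective L ⟨hinj, hsurjL⟩), ?_⟩
  intro x u hux
  have hUx : UU x = u := by
    refine Subtype.ext (Units.ext (Subtype.ext ?_)).symm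
    exact hux.trans (hUUval x).symm
  have h4 : (AddEquiv.toMultiplicativeLeft (AddEquiv.ofBijective L ⟨hinj, hsurjL⟩))
      (Multiplicative.ofAdd (QuotientAddGroup.mk x))
      = Additive.toMul (L (QuotientAddGroup.mk x)) := rfl
  rw [h4]
  have h5 : L (QuotientAddGroup.mk x)
      = Additive.ofMul (QuotientGroup.mk (UU x) : G ⧸ H) := rfl
  rw [h5, hUx]
  rfl
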